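/- Let Δ : H → H ⊗ H be the unique K-linear map on the free K-vector space H on forests of planar rooted trees such that Δ(|) = 0 and, in Sweedler notation, Δ(x ≻ y) = x₍₁₎ ⊗ (x₍₂₎ ≻ y) + (x ≻ y₍₁₎) ⊗ y₍₂₎ + x ⊗ y and Δ(x * y) = x₍₁₎ ⊗ (x₍₂₎ * y) + (x * y₍₁₎) ⊗ y₍₂₎ + x ⊗ y for all x, y ∈ H. Then Δ is coassociative: (Δ ⊗ id) ∘ Δ = (id ⊗ Δ) ∘ Δ. -/

import Mathlib

open scoped TensorProduct

/-- Planar rooted trees: a tree is either the leaf `|`, or a grafting of at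
least two planar rooted trees (`graft t₁ t₂ rest` represents `[t₁, t₂, rest…]`). -/
inductive PTree : Type
  | leaf : PTree
  | graft (t₁ t₂ : PTree) (rest : List PTree) : PTree

/-- A forest is a nonempty word of planar rooted trees. -/
abbrev Forest : Type := {l : List PTree // l ≠ []}

/-- Grafting of a list of trees (only meaningful on lists of length ≥ 2;
on shorter lists we return a junk value, which is never used). -/
def graftList : List PTree → PTree
  | [] => .leaf
  | [a] => a
  | a :: b :: rest => .graft a b rest

mutual
/-- Number of leaves of a planar rooted tree. -/
def leavesT : PTree → ℕ
  | .leaf => 1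
  | .graft a b rest => leavesT a + leavesT b + leavesL rest

/-- Sum of the numbers of leaves of a list of trees. -/
def leavesL : List PTree → ℕ
  | [] => 0
  | t :: ts => leavesT t + leavesL ts
end

/-- Number of leaves of a forest. -/
def leavesF (w : Forest) : ℕ := leavesL w.1

variable (K : Type*) [Field K]

/-- `H K` is the free `K`-vector space with basis the set of forests of
planar rooted trees. -/
abbrev H : Type _ := Forest →₀ K

/-- The leaf, as a (one-tree) forest. -/
def leafF : Forest := ⟨[PTree.leaf], by simp⟩

/-- The concatenation product `*`, as a bilinear map on `H K`;
on basis forests it is concatenation of words. -/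
noncomputable def mulH : H K →ₗ[K] H K →ₗ[K] H K :=
  Finsupp.lift (H K →ₗ[K] H K) K Forest fun x =>
    Finsupp.lift (H K) K Forest fun y =>
      Finsupp.single ⟨x.1 ++ y.1, by simp [x.2]⟩ 1

/-- The grafting operation `≻` on two basis forests:
`(t₁…tₚ) ≻ (s₁…s_q) = Σ_{k=1}^{q} Σ_{i=0}^{p−1}
t₁…t_{p−(i+1)} [t_{p−i},…,tₚ, s₁,…,s_k] s_{k+1}…s_q`. -/
noncomputable def succForest (x y : Forest) : H K :=
  ∑ k ∈ Finset.range y.1.length, ∑ i ∈ Finset.range x.1.length,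
    Finsupp.single
      ⟨x.1.take (x.1.length - (i + 1)) ++
        (graftList (x.1.drop (x.1.length - (i + 1)) ++ y.1.take (k + 1)) :: y.1.drop (k + 1)),
        by simp⟩ 1

/-- The operation `≻`, as a bilinear map on `H K`. -/
noncomputable def succH : H K →ₗ[K] H K →ₗ[K] H K :=
  Finsupp.lift (H K →ₗ[K] H K) K Forest fun x =>
    Finsupp.lift (H K) K Forest fun y => succForest K x y

/-- A shortcut instance (definitionally the standard one) to help elaboration. -/
noncomputable instance : Zero (H K ⊗[K] H K) :=
  (inferInstance : AddCommMonoid (H K ⊗[K] H K)).toZero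


set_option maxHeartbeats 1000000
set_option synthInstance.maxHeartbeats 1000000

noncomputable instance : Zero ((H K ⊗[K] H K) ⊗[K] H K) :=
  (inferInstance : AddCommMonoid ((H K ⊗[K] H K) ⊗[K] H K)).toZero

noncomputable instance : Zero (H K ⊗[K] H K ⊗[K] H K) :=
  (inferInstance : AddCommMonoid (H K ⊗[K] H K ⊗[K] H K)).toZero

namespace Stmt5Aux

open LinearMap TensorProduct

variable {K : Type*} [Field K]

local notation "α" => TensorProduct.assoc K (H K) (H K) (H K)

lemma aux_I1 (f : H K →ₗ[K] H K) (Δ : H K →ₗ[K] H K ⊗[K] H K) (w : H K ⊗[K] H K) :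
    α (rTensor (H K) Δ (lTensor (H K) f w))
      = lTensor (H K) (lTensor (H K) f) (α (rTensor (H K) Δ w)) := by
  induction w using TensorProduct.induction_on with
  | zero => simp
  | tmul a b =>
      simp only [lTensor_tmul, rTensor_tmul]
      induction (Δ a) using TensorProduct.induction_on with
      | zero => simp
      | tmul p q => simp [assoc_tmul]
      | add s t hs ht => simp only [add_tmul, map_add, hs, ht]
  | add s t hs ht => simp only [map_add, hs, ht]

lemma aux_I2 (f : H K →ₗ[K] H K) (w : (H K ⊗[K] H K) ⊗[K] H K) :
    α (rTensor (H K) (rTensor (H K) f) w) = rTensor (H K ⊗[K] H K) f (α w) := by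
  induction w using TensorProduct.induction_on with
  | zero => simp
  | tmul s c =>
      induction s using TensorProduct.induction_on with
      | zero => simp
      | tmul p q => simp [assoc_tmul]
      | add s t hs ht => simp only [add_tmul, map_add, hs, ht]
  | add s t hs ht => simp only [map_add, hs, ht]

lemma aux_I3 (x : H K) (v : H K ⊗[K] H K) :
    α (rTensor (H K) (TensorProduct.mk K (H K) (H K) x) v) = x ⊗ₜ[K] v := by
  induction v using TensorProduct.induction_on with
  | zero => simp
  | tmul c d => simp [assoc_tmul]
  | add s t hs ht => simp only [map_add, hs, ht, tmul_add]

lemma aux_I4 (y : H K) (u : H K ⊗[K] H K) :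
    α (u ⊗ₜ[K] y) = lTensor (H K) ((TensorProduct.mk K (H K) (H K)).flip y) u := by
  induction u using TensorProduct.induction_on with
  | zero => simp
  | tmul a b => simp [assoc_tmul]
  | add s t hs ht => simp only [add_tmul, map_add, hs, ht]

lemma aux_comm (f : H K →ₗ[K] H K) (Δ : H K →ₗ[K] H K ⊗[K] H K) (v : H K ⊗[K] H K) :
    rTensor (H K ⊗[K] H K) f (lTensor (H K) Δ v) = lTensor (H K) Δ (rTensor (H K) f v) := by
  induction v using TensorProduct.induction_on with
  | zero => simp
  | tmul a b => simp
  | add s t hs ht => simp only [map_add, hs, ht]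

noncomputable def gmap (m : H K →ₗ[K] H K →ₗ[K] H K) (u : H K ⊗[K] H K) :
    H K →ₗ[K] H K ⊗[K] H K where
  toFun c := lTensor (H K) (m.flip c) u
  map_add' c d := by simp only [map_add, lTensor_add, LinearMap.add_apply]
  map_smul' r c := by simp only [map_smul, lTensor_smul, LinearMap.smul_apply, RingHom.id_apply]

noncomputable def hmap (m : H K →ₗ[K] H K →ₗ[K] H K) (v : H K ⊗[K] H K) :
    H K →ₗ[K] H K ⊗[K] H K where
  toFun z := rTensor (H K) (m z) v
  map_add' c d := by simp only [map_add, rTensor_add, LinearMap.add_apply]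
  map_smul' r c := by simp only [map_smul, rTensor_smul, LinearMap.smul_apply, RingHom.id_apply]

lemma gmap_zero (m : H K →ₗ[K] H K →ₗ[K] H K) : gmap m (0 : H K ⊗[K] H K) = 0 := by
  refine LinearMap.ext fun z => ?_; simp [gmap]

lemma gmap_add (m : H K →ₗ[K] H K →ₗ[K] H K) (u u' : H K ⊗[K] H K) :
    gmap m (u + u') = gmap m u + gmap m u' := by
  refine LinearMap.ext fun z => ?_; simp [gmap]

lemma hmap_zero (m : H K →ₗ[K] H K →ₗ[K] H K) : hmap m (0 : H K ⊗[K] H K) = 0 := by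
  refine LinearMap.ext fun z => ?_; simp [hmap]

lemma hmap_add (m : H K →ₗ[K] H K →ₗ[K] H K) (v v' : H K ⊗[K] H K) :
    hmap m (v + v') = hmap m v + hmap m v' := by
  refine LinearMap.ext fun z => ?_; simp [hmap]

lemma aux_I5 (m : H K →ₗ[K] H K →ₗ[K] H K) (u v : H K ⊗[K] H K) :
    α (rTensor (H K) (gmap m u) v) = lTensor (H K) (hmap m v) u := by
  induction v using TensorProduct.induction_on with
  | zero => rw [map_zero, map_zero, hmap_zero, lTensor_zero, LinearMap.zero_apply]
  | tmul c d =>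
      induction u using TensorProduct.induction_on with
      | zero => rw [gmap_zero, rTensor_zero, LinearMap.zero_apply, map_zero, map_zero]
      | tmul a b => simp [gmap, hmap, assoc_tmul]
      | add s t hs ht =>
          rw [gmap_add, rTensor_add, LinearMap.add_apply, map_add, hs, ht, map_add]
  | add s t hs ht =>
      rw [map_add, map_add, hs, ht, hmap_add, lTensor_add, LinearMap.add_apply]

lemma closure (Δ : H K →ₗ[K] H K ⊗[K] H K) (m : H K →ₗ[K] H K →ₗ[K] H K)
    (hm : ∀ x y : H K, Δ (m x y)
        = lTensor (H K) (m.flip y) (Δ x) + rTensor (H K) (m x) (Δ y) + x ⊗ₜ[K] y)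
    (x y : H K)
    (hx : α (rTensor (H K) Δ (Δ x)) = lTensor (H K) Δ (Δ x))
    (hy : α (rTensor (H K) Δ (Δ y)) = lTensor (H K) Δ (Δ y)) :
    α (rTensor (H K) Δ (Δ (m x y))) = lTensor (H K) Δ (Δ (m x y)) := by
  have decompR : Δ ∘ₗ (m x)
      = gmap m (Δ x) + (rTensor (H K) (m x)) ∘ₗ Δ + TensorProduct.mk K (H K) (H K) x := by
    refine LinearMap.ext fun z => ?_
    simp only [comp_apply, LinearMap.add_apply, gmap, coe_mk, AddHom.coe_mk, mk_apply]
    exact hm x z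
  have decompL : Δ ∘ₗ (m.flip y)
      = (lTensor (H K) (m.flip y)) ∘ₗ Δ + hmap m (Δ y)
        + (TensorProduct.mk K (H K) (H K)).flip y := by
    refine LinearMap.ext fun z => ?_
    simp only [comp_apply, LinearMap.add_apply, hmap, coe_mk, AddHom.coe_mk, flip_apply, mk_apply]
    exact hm z y
  conv_lhs => rw [hm x y]
  conv_rhs => rw [hm x y]
  simp only [map_add]
  rw [aux_I1, hx]
  have e2 : rTensor (H K) Δ (rTensor (H K) (m x) (Δ y))
      = rTensor (H K) (Δ ∘ₗ (m x)) (Δ y) := by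
    rw [rTensor_comp, comp_apply]
  rw [e2, decompR, rTensor_add, rTensor_add, LinearMap.add_apply, LinearMap.add_apply, map_add, map_add]
  rw [aux_I5, aux_I3]
  have e3 : α (rTensor (H K) (rTensor (H K) (m x) ∘ₗ Δ) (Δ y))
      = lTensor (H K) Δ (rTensor (H K) (m x) (Δ y)) := by
    rw [rTensor_comp, comp_apply, aux_I2, hy, aux_comm]
  rw [e3]
  rw [rTensor_tmul, aux_I4]
  have f1 : lTensor (H K) Δ (lTensor (H K) (m.flip y) (Δ x))
      = lTensor (H K) (Δ ∘ₗ (m.flip y)) (Δ x) := by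
    rw [lTensor_comp, comp_apply]
  rw [f1, decompL, lTensor_add, lTensor_add, LinearMap.add_apply, LinearMap.add_apply]
  rw [lTensor_comp, comp_apply, lTensor_tmul]
  abel

end Stmt5Aux

namespace Stmt5Aux
open LinearMap TensorProduct
variable {K : Type*} [Field K]

theorem leavesT_pos : ∀ t : PTree, 0 < leavesT t
  | .leaf => by simp [leavesT]
  | .graft a b rest => by
      have := leavesT_pos a
      simp only [leavesT]
      omega

theorem leavesL_pos : ∀ {l : List PTree}, l ≠ [] → 0 < leavesL l
  | [], h => absurd rfl h
  | t :: ts, _ => by have := leavesT_pos t; simp only [leavesL]; omega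

theorem leavesL_append : ∀ l₁ l₂ : List PTree, leavesL (l₁ ++ l₂) = leavesL l₁ + leavesL l₂
  | [], l₂ => by simp [leavesL]
  | t :: ts, l₂ => by
      show leavesL (t :: (ts ++ l₂)) = _
      simp only [leavesL, leavesL_append ts l₂]; omega

lemma mulH_single (a b : Forest) :
    mulH K (Finsupp.single a (1:K)) (Finsupp.single b 1)
      = Finsupp.single ⟨a.1 ++ b.1, by simp [a.2]⟩ 1 := by
  simp [mulH, Finsupp.lift_apply, Finsupp.sum_single_index]

lemma succH_single (a b : Forest) :
    succH K (Finsupp.single a (1:K)) (Finsupp.single b 1) = succForest K a b := by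
  simp [succH, Finsupp.lift_apply, Finsupp.sum_single_index]

end Stmt5Aux

namespace Stmt5Aux
open LinearMap TensorProduct
variable {K : Type*} [Field K]

local notation "α" => TensorProduct.assoc K (H K) (H K) (H K)

noncomputable def coassocSet (Δ : H K →ₗ[K] H K ⊗[K] H K) : Submodule K (H K) where
  carrier := {z | α (rTensor (H K) Δ (Δ z)) = lTensor (H K) Δ (Δ z)}
  add_mem' := by
    intro a b ha hb
    simp only [Set.mem_setOf_eq, map_add] at *
    rw [ha, hb]
  zero_mem' := by simp only [Set.mem_setOf_eq, map_zero]
  smul_mem' := by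
    intro c a ha
    simp only [Set.mem_setOf_eq, map_smul] at *
    rw [ha]

lemma mem_coassocSet {Δ : H K →ₗ[K] H K ⊗[K] H K} {z : H K} :
    z ∈ coassocSet Δ ↔ α (rTensor (H K) Δ (Δ z)) = lTensor (H K) Δ (Δ z) :=
  Iff.rfl

theorem key (Δ : H K →ₗ[K] H K ⊗[K] H K)
    (h0 : Δ (Finsupp.single leafF 1) = 0)
    (hsucc : ∀ x y : H K, Δ (succH K x y)
        = LinearMap.lTensor (H K) ((succH K).flip y) (Δ x)
          + LinearMap.rTensor (H K) (succH K x) (Δ y) + x ⊗ₜ[K] y)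
    (hmul : ∀ x y : H K, Δ (mulH K x y)
        = LinearMap.lTensor (H K) ((mulH K).flip y) (Δ x)
          + LinearMap.rTensor (H K) (mulH K x) (Δ y) + x ⊗ₜ[K] y) :
    ∀ n : ℕ, ∀ w : Forest, leavesF w ≤ n → Finsupp.single w (1:K) ∈ coassocSet Δ := by
  intro n
  induction n with
  | zero =>
      intro w hw
      exact absurd hw (by have := leavesL_pos w.2; unfold leavesF; omega)
  | succ n IH =>
      have hcons : ∀ (a : PTree) (bs : List PTree), bs ≠ [] →
          leavesL (a :: bs) ≤ n + 1 →
          Finsupp.single (⟨a :: bs, by simp⟩ : Forest) (1:K) ∈ coassocSet Δ := by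
        intro a bs hbs hn
        have hpa := leavesT_pos a
        have hpb := leavesL_pos hbs
        have hL : leavesL (a :: bs) = leavesT a + leavesL bs := by simp [leavesL]
        have ea : leavesF (⟨[a], by simp⟩ : Forest) = leavesT a := by
          simp [leavesF, leavesL]
        have eb : leavesF (⟨bs, hbs⟩ : Forest) = leavesL bs := rfl
        have hx := IH ⟨[a], by simp⟩ (by omega)
        have hy := IH ⟨bs, hbs⟩ (by omega)
        have hc := closure Δ (mulH K) hmul _ _
          (mem_coassocSet.1 hx) (mem_coassocSet.1 hy)
        rw [mulH_single] at hc
        exact mem_coassocSet.2 hc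
      intro w hw
      obtain ⟨l, hl⟩ := w
      match l, hl with
      | [], hl => exact absurd rfl hl
      | [PTree.leaf], hl =>
          refine mem_coassocSet.2 ?_
          have e : (⟨[PTree.leaf], hl⟩ : Forest) = leafF := rfl
          rw [e, h0]
          simp
      | a :: b :: bs, hl =>
          exact hcons a (b :: bs) (by simp) hw
      | [PTree.graft t₁ t₂ rest], hl =>
          have hp1 := leavesT_pos t₁
          have hp2 := leavesT_pos t₂
          have hw' : leavesT t₁ + leavesT t₂ + leavesL rest ≤ n + 1 := by
            have : leavesF (⟨[PTree.graft t₁ t₂ rest], hl⟩ : Forest)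
                = leavesT t₁ + leavesT t₂ + leavesL rest := by
              simp [leavesF, leavesL, leavesT]
            omega
          have hx := IH ⟨[t₁], by simp⟩
            (by have : leavesF (⟨[t₁], by simp⟩ : Forest) = leavesT t₁ := by
                  simp [leavesF, leavesL]
                omega)
          have hy := IH ⟨t₂ :: rest, by simp⟩
            (by have : leavesF (⟨t₂ :: rest, by simp⟩ : Forest)
                  = leavesT t₂ + leavesL rest := by simp [leavesF, leavesL]
                omega)
          have hc := closure Δ (succH K) hsucc _ _
            (mem_coassocSet.1 hx) (mem_coassocSet.1 hy)
          rw [succH_single] at hc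
          have hmem : succForest K ⟨[t₁], by simp⟩ ⟨t₂ :: rest, by simp⟩ ∈ coassocSet Δ :=
            mem_coassocSet.2 hc
          have hval : succForest K (⟨[t₁], by simp⟩ : Forest) (⟨t₂ :: rest, by simp⟩ : Forest)
              = ∑ k ∈ Finset.range (rest.length + 1),
                  Finsupp.single
                    (⟨PTree.graft t₁ t₂ (rest.take k) :: rest.drop k, by simp⟩ : Forest)
                    (1:K) := by
            unfold succForest
            simp only [List.length_cons, List.length_nil, Nat.zero_add, Finset.sum_range_one,
              Nat.sub_self, List.take_zero, List.drop_zero, List.nil_append,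
              List.take_succ_cons, List.drop_succ_cons, List.singleton_append, graftList]
          rw [Finset.sum_range_succ] at hval
          have htop : (⟨PTree.graft t₁ t₂ (rest.take rest.length) :: rest.drop rest.length,
              by simp⟩ : Forest) = ⟨[PTree.graft t₁ t₂ rest], hl⟩ :=
            Subtype.ext (by simp)
          rw [htop] at hval
          have hsingle : Finsupp.single (⟨[PTree.graft t₁ t₂ rest], hl⟩ : Forest) (1:K)
              = succForest K ⟨[t₁], by simp⟩ ⟨t₂ :: rest, by simp⟩
                - ∑ k ∈ Finset.range rest.length,
                    Finsupp.single
                      (⟨PTree.graft t₁ t₂ (rest.take k) :: rest.drop k, by simp⟩ : Forest)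
                      (1:K) := by
            rw [hval]; abel
          rw [hsingle]
          refine Submodule.sub_mem _ hmem (Submodule.sum_mem _ fun k hk => ?_)
          have hk' : k < rest.length := Finset.mem_range.1 hk
          have hdrop : rest.drop k ≠ [] := by
            refine List.length_pos_iff.1 ?_
            rw [List.length_drop]; omega
          have hlv : leavesL (PTree.graft t₁ t₂ (rest.take k) :: rest.drop k) ≤ n + 1 := by
            have e1 := leavesL_append (rest.take k) (rest.drop k)
            rw [List.take_append_drop] at e1
            simp only [leavesL, leavesT]
            omega
          exact hcons _ _ hdrop hlv

theorem final (Δ : H K →ₗ[K] H K ⊗[K] H K)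
    (h0 : Δ (Finsupp.single leafF 1) = 0)
    (hsucc : ∀ x y : H K, Δ (succH K x y)
        = LinearMap.lTensor (H K) ((succH K).flip y) (Δ x)
          + LinearMap.rTensor (H K) (succH K x) (Δ y) + x ⊗ₜ[K] y)
    (hmul : ∀ x y : H K, Δ (mulH K x y)
        = LinearMap.lTensor (H K) ((mulH K).flip y) (Δ x)
          + LinearMap.rTensor (H K) (mulH K x) (Δ y) + x ⊗ₜ[K] y) :
    ∀ x : H K,
      α (LinearMap.rTensor (H K) Δ (Δ x)) = LinearMap.lTensor (H K) Δ (Δ x) := by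
  intro x
  have hall : ∀ w : Forest, Finsupp.single w (1:K) ∈ coassocSet Δ :=
    fun w => key Δ h0 hsucc hmul (leavesF w) w le_rfl
  have hx : x ∈ coassocSet Δ := by
    induction x using Finsupp.induction_linear with
    | zero => exact Submodule.zero_mem _
    | add f g hf hg => exact Submodule.add_mem _ hf hg
    | single a b =>
        have h := Submodule.smul_mem (coassocSet Δ) b (hall a)
        rwa [Finsupp.smul_single', mul_one] at h
  exact mem_coassocSet.1 hx

end Stmt5Aux

/-- The coproduct `Δ` on `H` determined by `Δ(|) = 0` and the
nonunital infinitesimal relations is coassociative: `(Δ ⊗ id) ∘ Δ = (id ⊗ Δ) ∘ Δ`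
(under the canonical associativity isomorphism of tensor products). -/
theorem stmt5 (K : Type*) [Field K] (Δ : H K →ₗ[K] H K ⊗[K] H K)
    (h0 : Δ (Finsupp.single leafF 1) = 0)
    (hsucc : ∀ x y : H K, Δ (succH K x y)
        = LinearMap.lTensor (H K) ((succH K).flip y) (Δ x)
          + LinearMap.rTensor (H K) (succH K x) (Δ y) + x ⊗ₜ[K] y)
    (hmul : ∀ x y : H K, Δ (mulH K x y)
        = LinearMap.lTensor (H K) ((mulH K).flip y) (Δ x)
          + LinearMap.rTensor (H K) (mulH K x) (Δ y) + x ⊗ₜ[K] y) :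
    ∀ x : H K,
      (TensorProduct.assoc K (H K) (H K) (H K)) (LinearMap.rTensor (H K) Δ (Δ x))
        = LinearMap.lTensor (H K) Δ (Δ x) := by
  exact fun x => Stmt5Aux.final Δ  h0 hsucc hmul x
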